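/- Let ν, s ∈ ℂ with s ≠ 0 and s² = ν, and set λ = (1 − ν²)/4. On the slit plane Ω = ℂ ∖ (−∞,0], define, using the principal branch z^μ := exp(μ·Log z), the map F₀(z) = (1/2)·[[(s + s⁻¹)·z^{(1−ν)/2}, (s − s⁻¹)·z^{(1+ν)/2}],[(s − s⁻¹)·z^{−(1+ν)/2}, (s + s⁻¹)·z^{−(1−ν)/2}]]. Then for every z ∈ Ω: (i) det F₀(z) = 1, and (ii) F₀ is complex-differentiable at z with F₀′(z) = (λ/z²)·[[z, −z²],[1, −z]]·F₀(z); equivalently, F₀ solves dF·F⁻¹ = [[G, −G²],[1, −G]]·Ω with Weierstrass data G = z and Ω = λ·dz/z². -/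

import Mathlib

open Matrix

/-- Principal power z^μ = exp(μ · Log z). -/
noncomputable def ppow (z μ : ℂ) : ℂ := Complex.exp (μ * Complex.log z)

/-- The frame F₀ for the elliptic and hyperbolic catenoids. -/
noncomputable def F₀ (s ν : ℂ) (z : ℂ) : Matrix (Fin 2) (Fin 2) ℂ :=
  (1 / 2 : ℂ) •
    !![(s + s⁻¹) * ppow z ((1 - ν) / 2), (s - s⁻¹) * ppow z ((1 + ν) / 2);
       (s - s⁻¹) * ppow z (-((1 + ν) / 2)), (s + s⁻¹) * ppow z (-((1 - ν) / 2))]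

lemma ppow_neg_mul (z μ : ℂ) : ppow z (-μ) * ppow z μ = 1 := by
  simp [ppow, ← Complex.exp_add]

lemma ppow_add_one (z : ℂ) (hz : z ≠ 0) (μ : ℂ) : ppow z (μ + 1) = z * ppow z μ := by
  unfold ppow
  rw [add_mul, one_mul, Complex.exp_add, Complex.exp_log hz, mul_comm]

lemma hasDerivAt_ppow {z : ℂ} (hz : z ∈ Complex.slitPlane) (μ : ℂ) :
    HasDerivAt (fun w => ppow w μ) (μ / z * ppow z μ) z := by
  have h := ((Complex.hasDerivAt_log hz).const_mul μ).cexp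
  convert h using 1
  exacts [rfl, rfl, by rw [ppow]; ring]

lemma entry_deriv (c μ : ℂ) {z : ℂ} (hz : z ∈ Complex.slitPlane) (d : ℂ)
    (hd : 1 / 2 * (c * (μ / z * ppow z μ)) = d) :
    HasDerivAt (fun w => 1 / 2 * (c * ppow w μ)) d z :=
  (((hasDerivAt_ppow hz μ).const_mul c).const_mul (1 / 2 : ℂ)).congr_deriv hd

set_option maxHeartbeats 1000000 in
theorem catenoid_frame (ν s : ℂ) (hs : s ≠ 0) (hsν : s ^ 2 = ν)
    (z : ℂ) (hz : z ∈ Complex.slitPlane) :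
    (F₀ s ν z).det = 1 ∧
    ∀ i j : Fin 2,
      HasDerivAt (fun w => F₀ s ν w i j)
        (((((1 - ν ^ 2) / 4) / z ^ 2) • (!![z, -z ^ 2; 1, -z] * F₀ s ν z)) i j) z := by
  have hz0 : z ≠ 0 := Complex.slitPlane_ne_zero hz
  have hinv : s * s⁻¹ = 1 := mul_inv_cancel₀ hs
  have h1 : ppow z (-((1 - ν) / 2)) * ppow z ((1 - ν) / 2) = 1 := ppow_neg_mul z _
  have h2 : ppow z (-((1 + ν) / 2)) * ppow z ((1 + ν) / 2) = 1 := ppow_neg_mul z _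
  have e1 : ppow z ((1 - ν) / 2) = z * ppow z (-((1 + ν) / 2)) := by
    have := ppow_add_one z hz0 (-((1 + ν) / 2))
    rw [show -((1 + ν) / 2) + 1 = (1 - ν) / 2 by ring] at this
    exact this
  have e2 : ppow z ((1 + ν) / 2) = z * ppow z (-((1 - ν) / 2)) := by
    have := ppow_add_one z hz0 (-((1 - ν) / 2))
    rw [show -((1 - ν) / 2) + 1 = (1 + ν) / 2 by ring] at this
    exact this
  constructor
  · simp only [F₀, Matrix.det_smul, Matrix.det_fin_two_of, Fintype.card_fin]
    linear_combination ((s + s⁻¹) ^ 2 / 4) * h1 - ((s - s⁻¹) ^ 2 / 4) * h2 + hinv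
  · intro i j
    fin_cases i <;> fin_cases j <;>
      simp only [F₀, Matrix.smul_apply, Matrix.mul_apply, Fin.sum_univ_two,
        Matrix.of_apply, Matrix.cons_val', Matrix.cons_val_zero, Matrix.cons_val_one,
        Matrix.head_cons, Matrix.head_fin_const, Matrix.empty_val',
        Matrix.cons_val_fin_one, smul_eq_mul, Fin.zero_eta, Fin.mk_one]
    · exact entry_deriv _ _ hz _ (by simp only [e1, e2]; field_simp; linear_combination (4*(1-ν)*ppow z (-((1+ν)/2))) * hsν)
    · exact entry_deriv _ _ hz _ (by simp only [e1, e2]; field_simp; linear_combination (4*(1+ν)*ppow z (-((1-ν)/2))) * hsν)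
    · exact entry_deriv _ _ hz _ (by simp only [e1, e2]; field_simp; linear_combination (-4*(1+ν)*ppow z (-((1+ν)/2))) * hsν)
    · exact entry_deriv _ _ hz _ (by simp only [e1, e2]; field_simp; linear_combination (4*(ν-1)*ppow z (-((1-ν)/2))) * hsν)
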